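/- Let n ≥ 3 and α, β > 0. The event {S_{n,α,β}(n−1) = β}, i.e. that the box (n−1,1) of S_{n,α,β} contains a β, has positive probability, and conditionally on this event the tableau (S_{n,α,β})_{n−1,2} of size n−1 obtained from S_{n,α,β} by deleting its (n−1)st row and its 2nd column is distributed as the random tableau S_{n−1,α,β} conditioned on its box (n−1,1) containing a β: for every T ∈ S̄_{n−1} with a β in box (n−1,1), P( (S_{n,α,β})_{n−1,2} = T | S_{n,α,β}(n−1,1) = β ) = P( S_{n−1,α,β} = T | S_{n−1,α,β}(n−1,1) = β ). -/

import Mathlib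

/-- The two symbols α, β that may fill a box of an α/β-staircase tableau. -/
inductive ABSymbol : Type
  | A : ABSymbol  -- α
  | B : ABSymbol  -- β
  deriving DecidableEq

instance : Fintype ABSymbol :=
  ⟨{ABSymbol.A, ABSymbol.B}, fun x => by cases x <;> simp⟩

/-- `f` is an α/β-staircase tableau of size `n`.  Boxes are indexed `0`-based, so
the box `(i, j)` (with `1 ≤ i, j` and `i + j ≤ n + 1` in the `1`-based indexing of
the paper) corresponds to `f ⟨i-1⟩ ⟨j-1⟩`; the condition `i + j ≤ n + 1` becomes
`(i-1) + (j-1) < n`, and the main diagonal `i + j = n + 1` becomes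
`(i-1) + (j-1) + 1 = n`. -/
def IsABStaircase (n : ℕ) (f : Fin n → Fin n → Option ABSymbol) : Prop :=
  (∀ i j : Fin n, n ≤ (i : ℕ) + (j : ℕ) → f i j = none) ∧
  (∀ i j i' : Fin n, f i j = some ABSymbol.A → i' < i → f i' j = none) ∧
  (∀ i j j' : Fin n, f i j = some ABSymbol.B → j' < j → f i j' = none) ∧
  (∀ i j : Fin n, (i : ℕ) + (j : ℕ) + 1 = n → f i j ≠ none)

/-- `N_α(f)`, the number of α's in `f`. -/
def NA (n : ℕ) (f : Fin n → Fin n → Option ABSymbol) : ℕ :=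
  (Finset.univ.filter (fun p : Fin n × Fin n => f p.1 p.2 = some ABSymbol.A)).card

/-- `N_β(f)`, the number of β's in `f`. -/
def NB (n : ℕ) (f : Fin n → Fin n → Option ABSymbol) : ℕ :=
  (Finset.univ.filter (fun p : Fin n × Fin n => f p.1 p.2 = some ABSymbol.B)).card

/-- The weight `wt(f) = α^{N_α(f)} β^{N_β(f)}`. -/
noncomputable def wt (α β : ℝ) (n : ℕ) (f : Fin n → Fin n → Option ABSymbol) : ℝ :=
  α ^ NA n f * β ^ NB n f

open scoped Classical in
/-- The partition function `Z_n(α, β) = Σ_{S ∈ S̄_n} wt(S)`. -/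
noncomputable def Z (α β : ℝ) (n : ℕ) : ℝ :=
  ∑ f ∈ Finset.univ.filter
      (fun f : Fin n → Fin n → Option ABSymbol => IsABStaircase n f),
    wt α β n f

open scoped Classical in
/-- The probability that the random tableau `S_{n,α,β}` lies in the event `E`. -/
noncomputable def stProb (α β : ℝ) (n : ℕ)
    (E : (Fin n → Fin n → Option ABSymbol) → Prop) : ℝ :=
  (∑ f ∈ Finset.univ.filter
      (fun f : Fin n → Fin n → Option ABSymbol => IsABStaircase n f ∧ E f),
    wt α β n f) / Z α β n

open scoped Classical in
/-- The expectation of `g` under the law of the random tableau `S_{n,α,β}`. -/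
noncomputable def stExp (α β : ℝ) (n : ℕ)
    (g : (Fin n → Fin n → Option ABSymbol) → ℝ) : ℝ :=
  (∑ f ∈ Finset.univ.filter
      (fun f : Fin n → Fin n → Option ABSymbol => IsABStaircase n f),
    wt α β n f * g f) / Z α β n

/-- `diag2 f j` is the content of the second-main-diagonal box `(n - j, j)`
(in the `1`-based indexing of the paper), defined for `1 ≤ j ≤ n - 1`. -/
def diag2 {n : ℕ} (f : Fin n → Fin n → Option ABSymbol) (j : ℕ) : Option ABSymbol :=
  if h : 1 ≤ j ∧ j + 1 ≤ n then f ⟨n - j - 1, by omega⟩ ⟨j - 1, by omega⟩ else none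

/-- `A_n`, the number of α's on the second main diagonal of `f`. -/
def Acount (n : ℕ) (f : Fin n → Fin n → Option ABSymbol) : ℕ :=
  ((Finset.Icc 1 (n - 1)).filter (fun j => diag2 f j = some ABSymbol.A)).card

/-- `B_n`, the number of β's on the second main diagonal of `f`. -/
def Bcount (n : ℕ) (f : Fin n → Fin n → Option ABSymbol) : ℕ :=
  ((Finset.Icc 1 (n - 1)).filter (fun j => diag2 f j = some ABSymbol.B)).card

/-- `X_n`, the number of nonempty boxes on the second main diagonal of `f`. -/
def Xcount (n : ℕ) (f : Fin n → Fin n → Option ABSymbol) : ℕ :=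
  ((Finset.Icc 1 (n - 1)).filter (fun j => diag2 f j ≠ none)).card

/-- `J_{r,m}`: the set of `r`-tuples `1 ≤ j_1 < … < j_r ≤ m` with
`j_k ≤ j_{k+1} - 2` for all `k`. -/
def Jset (r m : ℕ) : Finset (Fin r → ℕ) :=
  (Fintype.piFinset (fun _ : Fin r => Finset.Icc 1 m)).filter
    (fun j => ∀ k l : Fin r, k < l → j k + 2 ≤ j l)

/-- The tableau of size `n - 1` obtained from `f` by deleting its row of
(`0`-based) index `i0` and its column of (`0`-based) index `j0`. -/
def delRC (n : ℕ) (f : Fin n → Fin n → Option ABSymbol) (i0 j0 : ℕ) :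
    Fin (n - 1) → Fin (n - 1) → Option ABSymbol :=
  fun i j =>
    f ⟨if (i : ℕ) < i0 then (i : ℕ) else (i : ℕ) + 1,
        by have := i.isLt; split <;> omega⟩
      ⟨if (j : ℕ) < j0 then (j : ℕ) else (j : ℕ) + 1,
        by have := j.isLt; split <;> omega⟩

namespace StairAux

open Finset

/-- row embedding skipping row `k+1`. -/
def rIdx (k : ℕ) (i : Fin (k+2)) : Fin (k+3) :=
  ⟨if (i:ℕ) < k+1 then (i:ℕ) else (i:ℕ)+1, by have := i.isLt; split <;> omega⟩

/-- column embedding skipping column `1`. -/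
def cIdx (k : ℕ) (j : Fin (k+2)) : Fin (k+3) :=
  ⟨if (j:ℕ) < 1 then (j:ℕ) else (j:ℕ)+1, by have := j.isLt; split <;> omega⟩

/-- insertion of the forced row `k+1` and column `1`. -/
def ins (k : ℕ) (T : Fin (k+2) → Fin (k+2) → Option ABSymbol) :
    Fin (k+3) → Fin (k+3) → Option ABSymbol :=
  fun i j =>
    if (i:ℕ) = k+1 then
      (if (j:ℕ) = 0 then some ABSymbol.B else if (j:ℕ) = 1 then some ABSymbol.A else none)
    else if (j:ℕ) = 1 then none
    else T ⟨if (i:ℕ) < k+1 then (i:ℕ) else (i:ℕ)-1, by have := i.isLt; split <;> omega⟩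
           ⟨if (j:ℕ) < 1 then (j:ℕ) else (j:ℕ)-1, by have := j.isLt; split <;> omega⟩

lemma delRC_apply (k : ℕ) (f : Fin (k+3) → Fin (k+3) → Option ABSymbol) (i j : Fin (k+2)) :
    delRC (k+3) f (k+1) 1 i j = f (rIdx k i) (cIdx k j) := rfl

lemma ins_val_row (k : ℕ) (T : Fin (k+2) → Fin (k+2) → Option ABSymbol)
    (i j : Fin (k+3)) (h : (i:ℕ) = k+1) :
    ins k T i j =
      (if (j:ℕ) = 0 then some ABSymbol.B else if (j:ℕ) = 1 then some ABSymbol.A else none) := by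
  simp [ins, h]

lemma ins_val_col (k : ℕ) (T : Fin (k+2) → Fin (k+2) → Option ABSymbol)
    (i j : Fin (k+3)) (h : (i:ℕ) ≠ k+1) (h2 : (j:ℕ) = 1) :
    ins k T i j = none := by
  simp [ins, h, h2]

lemma ins_val (k : ℕ) (T : Fin (k+2) → Fin (k+2) → Option ABSymbol)
    (i j : Fin (k+3)) (h : (i:ℕ) ≠ k+1) (h2 : (j:ℕ) ≠ 1) :
    ins k T i j =
      T ⟨if (i:ℕ) < k+1 then (i:ℕ) else (i:ℕ)-1, by have := i.isLt; split <;> omega⟩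
        ⟨if (j:ℕ) < 1 then (j:ℕ) else (j:ℕ)-1, by have := j.isLt; split <;> omega⟩ := by
  simp [ins, h, h2]

lemma ins_rc (k : ℕ) (T : Fin (k+2) → Fin (k+2) → Option ABSymbol) (i j : Fin (k+2)) :
    ins k T (rIdx k i) (cIdx k j) = T i j := by
  have hi := i.isLt; have hj := j.isLt
  have h1 : ((rIdx k i : Fin (k+3)) : ℕ) ≠ k+1 := by
    simp only [rIdx]; split <;> omega
  have h2 : ((cIdx k j : Fin (k+3)) : ℕ) ≠ 1 := by
    simp only [cIdx]; split <;> omega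
  rw [ins_val k T _ _ h1 h2]
  congr 1 <;> apply Fin.ext <;> simp only [rIdx, cIdx] <;> split <;> (try split) <;> omega

lemma delRC_ins (k : ℕ) (T : Fin (k+2) → Fin (k+2) → Option ABSymbol) :
    delRC (k+3) (ins k T) (k+1) 1 = T := by
  funext i j
  rw [delRC_apply, ins_rc]

end StairAux

namespace StairAux

lemma forced_A (k : ℕ) (f : Fin (k+3) → Fin (k+3) → Option ABSymbol)
    (hf : IsABStaircase (k+3) f) (hB : f ⟨k+1, by omega⟩ ⟨0, by omega⟩ = some ABSymbol.B) :
    f ⟨k+1, by omega⟩ ⟨1, by omega⟩ = some ABSymbol.A := by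
  obtain ⟨h1, h2, h3, h4⟩ := hf
  have hne := h4 ⟨k+1, by omega⟩ ⟨1, by omega⟩ (by simp)
  rcases hx : f ⟨k+1, by omega⟩ ⟨1, by omega⟩ with _ | s
  · exact absurd hx hne
  · cases s
    · rfl
    · have h0 := h3 ⟨k+1, by omega⟩ ⟨1, by omega⟩ ⟨0, by omega⟩ hx (by simp [Fin.lt_def])
      rw [h0] at hB; exact absurd hB (by simp)

lemma corner_del (k : ℕ) (f : Fin (k+3) → Fin (k+3) → Option ABSymbol)
    (hf : IsABStaircase (k+3) f) (hB : f ⟨k+1, by omega⟩ ⟨0, by omega⟩ = some ABSymbol.B) :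
    f ⟨k+2, by omega⟩ ⟨0, by omega⟩ = some ABSymbol.B := by
  obtain ⟨h1, h2, h3, h4⟩ := hf
  have hne := h4 ⟨k+2, by omega⟩ ⟨0, by omega⟩ (by simp)
  rcases hx : f ⟨k+2, by omega⟩ ⟨0, by omega⟩ with _ | s
  · exact absurd hx hne
  · cases s
    · have h0 := h2 ⟨k+2, by omega⟩ ⟨0, by omega⟩ ⟨k+1, by omega⟩ hx (by simp [Fin.lt_def])
      rw [h0] at hB; exact absurd hB (by simp)
    · rfl

lemma ins_del (k : ℕ) (f : Fin (k+3) → Fin (k+3) → Option ABSymbol)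
    (hf : IsABStaircase (k+3) f) (hB : f ⟨k+1, by omega⟩ ⟨0, by omega⟩ = some ABSymbol.B) :
    ins k (delRC (k+3) f (k+1) 1) = f := by
  have hA1 := forced_A k f hf hB
  obtain ⟨h1, h2, h3, h4⟩ := hf
  funext i j
  by_cases hi : (i:ℕ) = k+1
  · rw [ins_val_row _ _ _ _ hi]
    have hieq : i = ⟨k+1, by omega⟩ := Fin.ext hi
    by_cases hj0 : (j:ℕ) = 0
    · have hjeq : j = ⟨0, by omega⟩ := Fin.ext hj0
      rw [if_pos hj0, hieq, hjeq, hB]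
    · by_cases hj1 : (j:ℕ) = 1
      · have hjeq : j = ⟨1, by omega⟩ := Fin.ext hj1
        rw [if_neg hj0, if_pos hj1, hieq, hjeq, hA1]
      · rw [if_neg hj0, if_neg hj1]
        exact (h1 i j (by omega)).symm
  · by_cases hj : (j:ℕ) = 1
    · rw [ins_val_col _ _ _ _ hi hj]
      have hjeq : j = ⟨1, by omega⟩ := Fin.ext hj
      rcases lt_or_gt_of_ne hi with h | h
      · rw [hjeq]
        exact (h2 ⟨k+1, by omega⟩ ⟨1, by omega⟩ i hA1 (by simpa [Fin.lt_def] using h)).symm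
      · have : (i:ℕ) = k+2 := by have := i.isLt; omega
        exact (h1 i j (by omega)).symm
    · rw [ins_val _ _ _ _ hi hj, delRC_apply]
      congr 1 <;> apply Fin.ext <;> simp only [rIdx, cIdx] <;>
        have hi2 := i.isLt <;> have hj2 := j.isLt <;>
        split <;> (try split) <;> (try split) <;> omega

lemma isStaircase_ins (k : ℕ) (T : Fin (k+2) → Fin (k+2) → Option ABSymbol)
    (hT : IsABStaircase (k+2) T)
    (hc : T ⟨k+1, by omega⟩ ⟨0, by omega⟩ = some ABSymbol.B) :
    IsABStaircase (k+3) (ins k T) := by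
  obtain ⟨h1, h2, h3, h4⟩ := hT
  refine ⟨?_, ?_, ?_, ?_⟩
  · intro i j hij
    by_cases hi : (i:ℕ) = k+1
    · rw [ins_val_row _ _ _ _ hi, if_neg (by omega), if_neg (by omega)]
    · by_cases hj : (j:ℕ) = 1
      · exact ins_val_col _ _ _ _ hi hj
      · rw [ins_val _ _ _ _ hi hj]
        apply h1
        have hi2 := i.isLt; have hj2 := j.isLt
        simp only
        split <;> (try split) <;> (try split) <;> omega
  · intro i j i' hA hlt
    by_cases hi : (i:ℕ) = k+1
    · rw [ins_val_row _ _ _ _ hi] at hA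
      have hj : (j:ℕ) = 1 := by
        by_cases hj0 : (j:ℕ) = 0
        · rw [if_pos hj0] at hA; exact absurd hA (by simp)
        · by_cases hj1 : (j:ℕ) = 1
          · exact hj1
          · rw [if_neg hj0, if_neg hj1] at hA; exact absurd hA (by simp)
      have hi' : (i':ℕ) ≠ k+1 := by
        have := hlt; rw [Fin.lt_def] at this; omega
      exact ins_val_col _ _ _ _ hi' hj
    · by_cases hj : (j:ℕ) = 1
      · rw [ins_val_col _ _ _ _ hi hj] at hA; exact absurd hA (by simp)
      · rw [ins_val _ _ _ _ hi hj] at hA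
        by_cases hi' : (i':ℕ) = k+1
        · -- then i = k+2
          have hik : (i:ℕ) = k+2 := by
            have := i.isLt; rw [Fin.lt_def] at hlt; omega
          rw [ins_val_row _ _ _ _ hi']
          by_cases hj0 : (j:ℕ) = 0
          · -- T corner would be A, contradiction with B
            exfalso
            have : T ⟨k+1, by omega⟩ ⟨0, by omega⟩ = some ABSymbol.A := by
              convert hA using 2 <;> apply Fin.ext <;> simp only <;>
                split <;> omega
            rw [this] at hc; exact absurd hc (by simp)
          · rw [if_neg hj0, if_neg hj]
        · rw [ins_val _ _ _ _ hi' hj]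
          apply h2 _ _ _ hA
          rw [Fin.lt_def] at hlt ⊢
          simp only
          split <;> (try split) <;> omega
  · intro i j j' hBv hlt
    by_cases hi : (i:ℕ) = k+1
    · rw [ins_val_row _ _ _ _ hi] at hBv
      have hj : (j:ℕ) = 0 := by
        by_cases hj0 : (j:ℕ) = 0
        · exact hj0
        · by_cases hj1 : (j:ℕ) = 1
          · rw [if_neg hj0, if_pos hj1] at hBv; exact absurd hBv (by simp)
          · rw [if_neg hj0, if_neg hj1] at hBv; exact absurd hBv (by simp)
      rw [Fin.lt_def] at hlt; omega
    · by_cases hj : (j:ℕ) = 1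
      · rw [ins_val_col _ _ _ _ hi hj] at hBv; exact absurd hBv (by simp)
      · rw [ins_val _ _ _ _ hi hj] at hBv
        by_cases hj' : (j':ℕ) = 1
        · exact ins_val_col _ _ _ _ hi hj'
        · rw [ins_val _ _ _ _ hi hj']
          apply h3 _ _ _ hBv
          rw [Fin.lt_def] at hlt ⊢
          simp only
          split <;> (try split) <;> omega
  · intro i j hdiag
    by_cases hi : (i:ℕ) = k+1
    · have hj : (j:ℕ) = 1 := by omega
      rw [ins_val_row _ _ _ _ hi, if_neg (by omega), if_pos hj]
      simp
    · have hj : (j:ℕ) ≠ 1 := by omega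
      rw [ins_val _ _ _ _ hi hj]
      apply h4
      have hi2 := i.isLt
      simp only
      split <;> (try split) <;> omega

lemma isStaircase_del (k : ℕ) (f : Fin (k+3) → Fin (k+3) → Option ABSymbol)
    (hf : IsABStaircase (k+3) f) :
    IsABStaircase (k+2) (delRC (k+3) f (k+1) 1) := by
  obtain ⟨h1, h2, h3, h4⟩ := hf
  refine ⟨?_, ?_, ?_, ?_⟩
  · intro i j hij
    rw [delRC_apply]
    apply h1
    have hi2 := i.isLt; have hj2 := j.isLt
    simp only [rIdx, cIdx]
    split <;> (try split) <;> (try split) <;> omega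
  · intro i j i' hA hlt
    rw [delRC_apply] at hA ⊢
    apply h2 _ _ _ hA
    rw [Fin.lt_def] at hlt ⊢
    simp only [rIdx]
    split <;> (try split) <;> omega
  · intro i j j' hBv hlt
    rw [delRC_apply] at hBv ⊢
    apply h3 _ _ _ hBv
    rw [Fin.lt_def] at hlt ⊢
    simp only [cIdx]
    split <;> (try split) <;> omega
  · intro i j hdiag
    rw [delRC_apply]
    apply h4
    have hi2 := i.isLt; have hj2 := j.isLt
    simp only [rIdx, cIdx]
    split <;> (try split) <;> (try split) <;> omega

end StairAux

namespace StairAux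

lemma rc_inj (k : ℕ) : Function.Injective
    (fun p : Fin (k+2) × Fin (k+2) => (rIdx k p.1, cIdx k p.2)) := by
  rintro ⟨a, b⟩ ⟨a', b'⟩ h
  simp only [Prod.mk.injEq] at h
  obtain ⟨h1, h2⟩ := h
  have e1 : (rIdx k a : ℕ) = (rIdx k a' : ℕ) := by rw [h1]
  have e2 : (cIdx k b : ℕ) = (cIdx k b' : ℕ) := by rw [h2]
  simp only [rIdx, cIdx] at e1 e2
  have := a.isLt; have := a'.isLt; have := b.isLt; have := b'.isLt
  ext
  · dsimp only
    split at e1 <;> split at e1 <;> omega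
  · dsimp only
    split at e2 <;> split at e2 <;> omega

lemma filterA_ins (k : ℕ) (T : Fin (k+2) → Fin (k+2) → Option ABSymbol) :
    (Finset.univ.filter (fun p : Fin (k+3) × Fin (k+3) =>
        ins k T p.1 p.2 = some ABSymbol.A))
      = insert (⟨k+1, by omega⟩, ⟨1, by omega⟩)
          ((Finset.univ.filter (fun p : Fin (k+2) × Fin (k+2) =>
              T p.1 p.2 = some ABSymbol.A)).image
            (fun p => (rIdx k p.1, cIdx k p.2))) := by
  ext ⟨i, j⟩
  simp only [Finset.mem_filter, Finset.mem_univ, true_and, Finset.mem_insert,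
    Finset.mem_image, Prod.mk.injEq, Prod.exists]
  constructor
  · intro h
    by_cases hi : (i:ℕ) = k+1
    · rw [ins_val_row _ _ _ _ hi] at h
      left
      split_ifs at h with hj0 hj1
      · exact absurd h (by simp)
      · exact ⟨Fin.ext hi, Fin.ext hj1⟩
    · by_cases hj : (j:ℕ) = 1
      · rw [ins_val_col _ _ _ _ hi hj] at h; exact absurd h (by simp)
      · rw [ins_val _ _ _ _ hi hj] at h
        right
        refine ⟨_, _, h, ?_, ?_⟩
        · apply Fin.ext
          have := i.isLt
          simp only [rIdx]
          split <;> (try split) <;> omega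
        · apply Fin.ext
          have := j.isLt
          simp only [cIdx]
          split <;> (try split) <;> omega
  · rintro (⟨h1, h2⟩ | ⟨a, b, hab, h1, h2⟩)
    · rw [ins_val_row _ _ _ _ (by rw [h1]), h2]
      norm_num
    · rw [← h1, ← h2, ins_rc]
      exact hab

lemma filterB_ins (k : ℕ) (T : Fin (k+2) → Fin (k+2) → Option ABSymbol) :
    (Finset.univ.filter (fun p : Fin (k+3) × Fin (k+3) =>
        ins k T p.1 p.2 = some ABSymbol.B))
      = insert (⟨k+1, by omega⟩, ⟨0, by omega⟩)
          ((Finset.univ.filter (fun p : Fin (k+2) × Fin (k+2) =>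
              T p.1 p.2 = some ABSymbol.B)).image
            (fun p => (rIdx k p.1, cIdx k p.2))) := by
  ext ⟨i, j⟩
  simp only [Finset.mem_filter, Finset.mem_univ, true_and, Finset.mem_insert,
    Finset.mem_image, Prod.mk.injEq, Prod.exists]
  constructor
  · intro h
    by_cases hi : (i:ℕ) = k+1
    · rw [ins_val_row _ _ _ _ hi] at h
      left
      split_ifs at h with hj0 hj1
      · exact ⟨Fin.ext hi, Fin.ext hj0⟩
      · exact absurd h (by simp)
    · by_cases hj : (j:ℕ) = 1
      · rw [ins_val_col _ _ _ _ hi hj] at h; exact absurd h (by simp)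
      · rw [ins_val _ _ _ _ hi hj] at h
        right
        refine ⟨_, _, h, ?_, ?_⟩
        · apply Fin.ext
          have := i.isLt
          simp only [rIdx]
          split <;> (try split) <;> omega
        · apply Fin.ext
          have := j.isLt
          simp only [cIdx]
          split <;> (try split) <;> omega
  · rintro (⟨h1, h2⟩ | ⟨a, b, hab, h1, h2⟩)
    · rw [ins_val_row _ _ _ _ (by rw [h1]), h2]
      norm_num
    · rw [← h1, ← h2, ins_rc]
      exact hab

lemma NA_ins (k : ℕ) (T : Fin (k+2) → Fin (k+2) → Option ABSymbol) :
    NA (k+3) (ins k T) = NA (k+2) T + 1 := by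
  rw [NA, NA, filterA_ins, Finset.card_insert_of_notMem, Finset.card_image_of_injective _ (rc_inj k)]
  intro hmem
  rw [Finset.mem_image] at hmem
  obtain ⟨⟨a, b⟩, _, hab⟩ := hmem
  have : (cIdx k b : ℕ) = 1 := by
    rw [show cIdx k b = (⟨1, by omega⟩ : Fin (k+3)) from congrArg Prod.snd hab]
  simp only [cIdx] at this
  split at this <;> omega

lemma NB_ins (k : ℕ) (T : Fin (k+2) → Fin (k+2) → Option ABSymbol) :
    NB (k+3) (ins k T) = NB (k+2) T + 1 := by
  rw [NB, NB, filterB_ins, Finset.card_insert_of_notMem, Finset.card_image_of_injective _ (rc_inj k)]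
  intro hmem
  rw [Finset.mem_image] at hmem
  obtain ⟨⟨a, b⟩, _, hab⟩ := hmem
  have : (rIdx k a : ℕ) = k+1 := by
    rw [show rIdx k a = (⟨k+1, by omega⟩ : Fin (k+3)) from congrArg Prod.fst hab]
  have ha := a.isLt
  simp only [rIdx] at this
  split at this <;> omega

lemma wt_ins (k : ℕ) (α β : ℝ) (T : Fin (k+2) → Fin (k+2) → Option ABSymbol) :
    wt α β (k+3) (ins k T) = α * β * wt α β (k+2) T := by
  rw [wt, wt, NA_ins, NB_ins, pow_succ, pow_succ]
  ring

lemma wt_pos {α β : ℝ} (hα : 0 < α) (hβ : 0 < β) (n : ℕ)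
    (f : Fin n → Fin n → Option ABSymbol) : 0 < wt α β n f :=
  mul_pos (pow_pos hα _) (pow_pos hβ _)

/-- the all-α staircase tableau. -/
def allA (n : ℕ) : Fin n → Fin n → Option ABSymbol :=
  fun i j => if (i:ℕ) + (j:ℕ) + 1 = n then some ABSymbol.A else none

lemma isStaircase_allA (n : ℕ) : IsABStaircase n (allA n) := by
  refine ⟨?_, ?_, ?_, ?_⟩
  · intro i j hij
    rw [allA, if_neg (by omega)]
  · intro i j i' hA hlt
    rw [allA] at hA
    split at hA
    · rw [Fin.lt_def] at hlt
      rw [allA, if_neg (by omega)]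
    · exact absurd hA (by simp)
  · intro i j j' hB hlt
    rw [allA] at hB
    split at hB <;> exact absurd hB (by simp)
  · intro i j hdiag
    rw [allA, if_pos hdiag]
    simp

lemma Z_pos {α β : ℝ} (hα : 0 < α) (hβ : 0 < β) (n : ℕ) : 0 < Z α β n := by
  rw [Z]
  apply Finset.sum_pos'
  · intro f _
    exact (wt_pos hα hβ n f).le
  · exact ⟨allA n, by simp [isStaircase_allA n], wt_pos hα hβ n (allA n)⟩

/-- the all-α staircase of size `k+2` with corner β. -/
def TB (k : ℕ) : Fin (k+2) → Fin (k+2) → Option ABSymbol :=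
  fun i j => if (i:ℕ) + (j:ℕ) + 1 = k+2 then
      (if (j:ℕ) = 0 then some ABSymbol.B else some ABSymbol.A) else none

lemma isStaircase_TB (k : ℕ) : IsABStaircase (k+2) (TB k) := by
  refine ⟨?_, ?_, ?_, ?_⟩
  · intro i j hij
    rw [TB, if_neg (by omega)]
  · intro i j i' hA hlt
    rw [TB] at hA
    split at hA
    · rw [Fin.lt_def] at hlt
      rw [TB, if_neg (by omega)]
    · exact absurd hA (by simp)
  · intro i j j' hB hlt
    rw [TB] at hB
    split at hB
    · split at hB
      · rw [Fin.lt_def] at hlt; omega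
      · exact absurd hB (by simp)
    · exact absurd hB (by simp)
  · intro i j hdiag
    rw [TB, if_pos hdiag]
    split <;> simp

lemma TB_corner (k : ℕ) : TB k ⟨k+1, by omega⟩ ⟨0, by omega⟩ = some ABSymbol.B := by
  rw [TB]
  simp

lemma diag2_one (k : ℕ) (f : Fin (k+3) → Fin (k+3) → Option ABSymbol) :
    diag2 f 1 = f ⟨k+1, by omega⟩ ⟨0, by omega⟩ := by
  rw [diag2, dif_pos ⟨le_refl 1, by omega⟩]
  rfl

end StairAux

namespace StairAux

lemma del_corner (k : ℕ) (f : Fin (k+3) → Fin (k+3) → Option ABSymbol)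
    (hf : IsABStaircase (k+3) f) (hB : f ⟨k+1, by omega⟩ ⟨0, by omega⟩ = some ABSymbol.B) :
    delRC (k+3) f (k+1) 1 ⟨k+1, by omega⟩ ⟨0, by omega⟩ = some ABSymbol.B := by
  rw [delRC_apply]
  convert corner_del k f hf hB using 2 <;> apply Fin.ext <;> simp [rIdx, cIdx]

lemma ins_corner (k : ℕ) (T : Fin (k+2) → Fin (k+2) → Option ABSymbol) :
    ins k T ⟨k+1, by omega⟩ ⟨0, by omega⟩ = some ABSymbol.B := by
  simp [ins]

end StairAux

/-- Lemma 2 (`BSWCorner`): conditionally on the box `(n-1, 1)` of `S_{n,α,β}`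
containing a β, the tableau `(S_{n,α,β})_{n-1,2}` (the `(n-1)`st row and the
`2`nd column removed) is distributed as `S_{n-1,α,β}` conditioned on having a β
in its box `(n-1, 1)`. -/
theorem stmt2 (n : ℕ) (hn : 3 ≤ n) (α β : ℝ) (hα : 0 < α) (hβ : 0 < β) :
    0 < stProb α β n (fun f => diag2 f 1 = some ABSymbol.B) ∧
    ∀ T : Fin (n - 1) → Fin (n - 1) → Option ABSymbol, IsABStaircase (n - 1) T →
      T ⟨n - 2, by omega⟩ ⟨0, by omega⟩ = some ABSymbol.B →
      stProb α β n (fun f => diag2 f 1 = some ABSymbol.B ∧ delRC n f (n - 2) 1 = T) /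
          stProb α β n (fun f => diag2 f 1 = some ABSymbol.B)
        = stProb α β (n - 1) (fun g => g = T) /
            stProb α β (n - 1)
              (fun g => g ⟨n - 2, by omega⟩ ⟨0, by omega⟩ = some ABSymbol.B) := by
  obtain ⟨k, rfl⟩ : ∃ k, n = k + 3 := ⟨n - 3, by omega⟩
  classical
  show
    0 < stProb α β (k+3) (fun f => diag2 f 1 = some ABSymbol.B) ∧
    ∀ T : Fin (k+2) → Fin (k+2) → Option ABSymbol, IsABStaircase (k+2) T →
      T ⟨k+1, by omega⟩ ⟨0, by omega⟩ = some ABSymbol.B →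
      stProb α β (k+3)
          (fun f => diag2 f 1 = some ABSymbol.B ∧ delRC (k+3) f (k+1) 1 = T) /
          stProb α β (k+3) (fun f => diag2 f 1 = some ABSymbol.B)
        = stProb α β (k+2) (fun g => g = T) /
            stProb α β (k+2)
              (fun g => g ⟨k+1, by omega⟩ ⟨0, by omega⟩ = some ABSymbol.B)
  set SB := Finset.univ.filter (fun g : Fin (k+2) → Fin (k+2) → Option ABSymbol =>
      IsABStaircase (k+2) g ∧ g ⟨k+1, by omega⟩ ⟨0, by omega⟩ = some ABSymbol.B) with hSB
  have hDpos : 0 < ∑ g ∈ SB, wt α β (k+2) g := by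
    apply Finset.sum_pos'
    · intro g _
      exact (StairAux.wt_pos hα hβ _ g).le
    · refine ⟨StairAux.TB k, ?_, StairAux.wt_pos hα hβ _ _⟩
      rw [hSB, Finset.mem_filter]
      exact ⟨Finset.mem_univ _, StairAux.isStaircase_TB k, StairAux.TB_corner k⟩
  have hden : stProb α β (k+3) (fun f => diag2 f 1 = some ABSymbol.B)
      = α * β * (∑ g ∈ SB, wt α β (k+2) g) / Z α β (k+3) := by
    rw [stProb]
    congr 1
    rw [Finset.mul_sum]
    refine Finset.sum_nbij' (i := fun f => delRC (k+3) f (k+1) 1)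
      (j := fun g => StairAux.ins k g) ?_ ?_ ?_ ?_ ?_
    · intro f hf
      simp only [Finset.mem_filter, Finset.mem_univ, true_and] at hf
      obtain ⟨hf1, hf2⟩ := hf
      rw [StairAux.diag2_one] at hf2
      simp only [hSB, Finset.mem_filter, Finset.mem_univ, true_and]
      exact ⟨StairAux.isStaircase_del k f hf1, StairAux.del_corner k f hf1 hf2⟩
    · intro g hg
      simp only [hSB, Finset.mem_filter, Finset.mem_univ, true_and] at hg
      obtain ⟨hg1, hg2⟩ := hg
      simp only [Finset.mem_filter, Finset.mem_univ, true_and]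
      refine ⟨StairAux.isStaircase_ins k g hg1 hg2, ?_⟩
      rw [StairAux.diag2_one]
      exact StairAux.ins_corner k g
    · intro f hf
      simp only [Finset.mem_filter, Finset.mem_univ, true_and] at hf
      obtain ⟨hf1, hf2⟩ := hf
      rw [StairAux.diag2_one] at hf2
      exact StairAux.ins_del k f hf1 hf2
    · intro g _
      exact StairAux.delRC_ins k g
    · intro f hf
      simp only [Finset.mem_filter, Finset.mem_univ, true_and] at hf
      obtain ⟨hf1, hf2⟩ := hf
      rw [StairAux.diag2_one] at hf2
      rw [← StairAux.wt_ins k α β (delRC (k+3) f (k+1) 1),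
        StairAux.ins_del k f hf1 hf2]
  have hZ3 := StairAux.Z_pos hα hβ (k+3)
  have hZ2 := StairAux.Z_pos hα hβ (k+2)
  constructor
  · rw [hden]
    exact div_pos (mul_pos (mul_pos hα hβ) hDpos) hZ3
  · intro T hT hTc
    have hnum : stProb α β (k+3)
        (fun f => diag2 f 1 = some ABSymbol.B ∧ delRC (k+3) f (k+1) 1 = T)
        = α * β * wt α β (k+2) T / Z α β (k+3) := by
      rw [stProb]
      congr 1
      have key : ∀ s : Finset (Fin (k+3) → Fin (k+3) → Option ABSymbol),
          (∀ f, f ∈ s ↔ (IsABStaircase (k+3) f ∧ (diag2 f 1 = some ABSymbol.B ∧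
            delRC (k+3) f (k+1) 1 = T))) →
          ∑ f ∈ s, wt α β (k+3) f = α * β * wt α β (k+2) T := by
        intro s hs
        have hset : s = {StairAux.ins k T} := by
          ext f
          rw [hs, Finset.mem_singleton]
          constructor
          · rintro ⟨h1, h2, h3⟩
            rw [StairAux.diag2_one] at h2
            rw [← h3]
            exact (StairAux.ins_del k f h1 h2).symm
          · rintro rfl
            refine ⟨StairAux.isStaircase_ins k T hT hTc, ?_, StairAux.delRC_ins k T⟩
            rw [StairAux.diag2_one]
            exact StairAux.ins_corner k T
        rw [hset, Finset.sum_singleton, StairAux.wt_ins]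
      exact key _ (fun f => by
        simp only [Finset.mem_filter, Finset.mem_univ, true_and])
    have hT1 : stProb α β (k+2) (fun g => g = T) = wt α β (k+2) T / Z α β (k+2) := by
      rw [stProb]
      congr 1
      have key : ∀ s : Finset (Fin (k+2) → Fin (k+2) → Option ABSymbol),
          (∀ g, g ∈ s ↔ (IsABStaircase (k+2) g ∧ g = T)) →
          ∑ g ∈ s, wt α β (k+2) g = wt α β (k+2) T := by
        intro s hs
        have hset : s = {T} := by
          ext g
          rw [hs, Finset.mem_singleton]
          constructor
          · rintro ⟨-, rfl⟩; rfl
          · rintro rfl; exact ⟨hT, rfl⟩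
        rw [hset, Finset.sum_singleton]
      exact key _ (fun g => by
        simp only [Finset.mem_filter, Finset.mem_univ, true_and])
    have hcorner : stProb α β (k+2)
        (fun g => g ⟨k+1, by omega⟩ ⟨0, by omega⟩ = some ABSymbol.B)
        = (∑ g ∈ SB, wt α β (k+2) g) / Z α β (k+2) := by
      rw [stProb]
      congr 1
      apply Finset.sum_congr _ (fun _ _ => rfl)
      ext g
      simp only [hSB, Finset.mem_filter, Finset.mem_univ, true_and]
    rw [hnum, hden, hT1, hcorner]
    have h1 : Z α β (k+3) ≠ 0 := hZ3.ne'
    have h2 : Z α β (k+2) ≠ 0 := hZ2.ne'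
    have h3 : (∑ g ∈ SB, wt α β (k+2) g) ≠ 0 := hDpos.ne'
    have h4 : α ≠ 0 := hα.ne'
    have h5 : β ≠ 0 := hβ.ne'
    field_simp
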